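/- For every k and every finite alphabet A, the class of languages definable by deterministic k-occurrence regular expressions over A is finite up to language equivalence; consequently, for each fixed k, the class of deterministic k-OREs is learnable in the limit from positive data. -/

import Mathlib

open Computability

/-- Regular expressions (with explicit parentheses) built from ∅, ε, letters,
concatenation, union, optional `?` and one-or-more `⁺`. -/
inductive PRE (α : Type) where
  | empty : PRE α
  | eps : PRE α
  | char : α → PRE α
  | paren : PRE α → PRE α
  | cat : PRE α → PRE α → PRE α
  | alt : PRE α → PRE α → PRE α
  | opt : PRE α → PRE α
  | pos : PRE α → PRE α

/-- The language of a regular expression. -/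
def PRE.lang {α : Type} : PRE α → Language α
  | .empty => 0
  | .eps => 1
  | .char a => {[a]}
  | .paren r => r.lang
  | .cat r s => r.lang * s.lang
  | .alt r s => r.lang + s.lang
  | .opt r => r.lang + 1
  | .pos r => r.lang * (r.lang)∗

/-- Replace the i-th occurrence of each letter `a` by the marked symbol `(a, i)`,
threading occurrence counters. -/
def PRE.markAux {α : Type} [DecidableEq α] : PRE α → (α → ℕ) → PRE (α × ℕ) × (α → ℕ)
  | .empty, c => (.empty, c)
  | .eps, c => (.eps, c)
  | .char a, c => (.char (a, c a + 1), fun b => if b = a then c a + 1 else c b)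
  | .paren r, c => let p := r.markAux c; (.paren p.1, p.2)
  | .cat r s, c => let p := r.markAux c; let q := s.markAux p.2; (.cat p.1 q.1, q.2)
  | .alt r s, c => let p := r.markAux c; let q := s.markAux p.2; (.alt p.1 q.1, q.2)
  | .opt r, c => let p := r.markAux c; (.opt p.1, p.2)
  | .pos r, c => let p := r.markAux c; (.pos p.1, p.2)

/-- The marked version r̄ of a regular expression. -/
def PRE.mark {α : Type} [DecidableEq α] (r : PRE α) : PRE (α × ℕ) :=
  (r.markAux fun _ => 0).1

/-- A regular expression is deterministic (one-unambiguous) if its marked version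
admits no two words w·a⁽ⁱ⁾·v and w·a⁽ʲ⁾·v′ with i ≠ j. -/
def PRE.Deterministic {α : Type} [DecidableEq α] (r : PRE α) : Prop :=
  ∀ (w v v' : List (α × ℕ)) (a : α) (i j : ℕ),
    w ++ (a, i) :: v ∈ r.mark.lang → w ++ (a, j) :: v' ∈ r.mark.lang → i = j

/-- Number of occurrences of the letter `a` in `r`. -/
def PRE.rep {α : Type} [DecidableEq α] : PRE α → α → ℕ
  | .empty, _ => 0
  | .eps, _ => 0
  | .char b, a => if b = a then 1 else 0
  | .paren r, a => r.rep a
  | .cat r s, a => r.rep a + s.rep a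
  | .alt r s, a => r.rep a + s.rep a
  | .opt r, a => r.rep a
  | .pos r, a => r.rep a

/-- `r` is a k-occurrence regular expression: every letter occurs at most `k` times. -/
def PRE.IsKORE {α : Type} [DecidableEq α] (k : ℕ) (r : PRE α) : Prop :=
  ∀ a, r.rep a ≤ k

/-- Length of the string representation (letters, ∅, ε, operators ·, +, ?, ⁺ and
parentheses each count as one character). -/
def PRE.len {α : Type} : PRE α → ℕ
  | .empty => 1
  | .eps => 1
  | .char _ => 1
  | .paren r => r.len + 2
  | .cat r s => r.len + s.len + 1
  | .alt r s => r.len + s.len + 1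
  | .opt r => r.len + 1
  | .pos r => r.len + 1

/-- `M` learns the class `R` in the limit from positive data: it is sound
(`S ⊆ L(M S)` for every sample `S`) and complete (every `r ∈ R` has a
characteristic sample `S_r ⊆ L(r)` such that `M S` is equivalent to `r`
whenever `S_r ⊆ S ⊆ L(r)`). -/
def Learns {α : Type} (M : Finset (List α) → PRE α) (R : Set (PRE α)) : Prop :=
  (∀ S : Finset (List α), ∀ w ∈ S, w ∈ (M S).lang) ∧
  ∀ r ∈ R, ∃ Sr : Finset (List α), (∀ w ∈ Sr, w ∈ r.lang) ∧
    ∀ S : Finset (List α), Sr ⊆ S → (∀ w ∈ S, w ∈ r.lang) → (M S).lang = r.lang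

namespace Stmt6Aux

open Language

variable {α : Type}

/-- Closure of a set of languages under optional, plus, and star. -/
def OPset (S : Set (Language α)) : Set (Language α) :=
  S ∪ ((· + 1) '' S) ∪ ((fun L : Language α => L * L∗) '' S) ∪ ((·∗) '' S)

lemma subset_OPset (S : Set (Language α)) : S ⊆ OPset S :=
  fun _ h => Or.inl (Or.inl (Or.inl h))

lemma OPset_mono {S T : Set (Language α)} (h : S ⊆ T) : OPset S ⊆ OPset T := by
  unfold OPset
  exact Set.union_subset_union (Set.union_subset_union
    (Set.union_subset_union h (Set.image_mono h)) (Set.image_mono h)) (Set.image_mono h)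

lemma OPset_finite {S : Set (Language α)} (h : S.Finite) : (OPset S).Finite :=
  (((h.union (h.image _)).union (h.image _)).union (h.image _))

lemma le_kstar_of_add_one (L : Language α) : L + 1 ≤ L∗ := by
  rw [add_eq_sup]
  exact sup_le le_kstar one_le_kstar

lemma kstar_add_one (L : Language α) : (L + 1)∗ = L∗ := by
  apply le_antisymm
  · have := kstar_mono (le_kstar_of_add_one L)
    rwa [kstar_idem] at this
  · apply kstar_mono
    rw [add_eq_sup]; exact le_sup_left

lemma opt_opt (L : Language α) : (L + 1) + 1 = L + 1 := by
  rw [add_assoc, add_idem]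

lemma opt_pos (L : Language α) : (L + 1) * (L + 1)∗ = L∗ := by
  rw [kstar_add_one, add_mul, one_mul, add_eq_sup]
  exact sup_eq_right.2 mul_kstar_le_kstar

lemma pos_opt (L : Language α) : (L * L∗) + 1 = L∗ := by
  rw [add_comm]; exact one_add_self_mul_kstar_eq_kstar L

lemma kstar_pos (L : Language α) : (L * L∗)∗ = L∗ := by
  apply le_antisymm
  · have := kstar_mono (mul_kstar_le_kstar (a := L))
    rwa [kstar_idem] at this
  · apply kstar_mono
    calc L = L * 1 := (mul_one L).symm
    _ ≤ L * L∗ := mul_le_mul_right one_le_kstar L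

lemma pos_pos (L : Language α) : (L * L∗) * (L * L∗)∗ = L * L∗ := by
  rw [kstar_pos, mul_assoc, kstar_mul_kstar]

lemma star_opt (L : Language α) : L∗ + 1 = L∗ := by
  rw [add_eq_sup]; exact sup_eq_left.2 one_le_kstar

lemma star_pos (L : Language α) : L∗ * (L∗)∗ = L∗ := by
  rw [kstar_idem, kstar_mul_kstar]

lemma OPset_opt {S : Set (Language α)} {L : Language α} (h : L ∈ OPset S) :
    L + 1 ∈ OPset S := by
  rcases h with ((h | ⟨M, hM, rfl⟩) | ⟨M, hM, rfl⟩) | ⟨M, hM, rfl⟩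
  · exact Or.inl (Or.inl (Or.inr ⟨L, h, rfl⟩))
  · rw [opt_opt]; exact Or.inl (Or.inl (Or.inr ⟨M, hM, rfl⟩))
  · rw [pos_opt]; exact Or.inr ⟨M, hM, rfl⟩
  · rw [star_opt]; exact Or.inr ⟨M, hM, rfl⟩

lemma OPset_pos {S : Set (Language α)} {L : Language α} (h : L ∈ OPset S) :
    L * L∗ ∈ OPset S := by
  rcases h with ((h | ⟨M, hM, rfl⟩) | ⟨M, hM, rfl⟩) | ⟨M, hM, rfl⟩
  · exact Or.inl (Or.inr ⟨L, h, rfl⟩)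
  · rw [opt_pos]; exact Or.inr ⟨M, hM, rfl⟩
  · rw [pos_pos]; exact Or.inl (Or.inr ⟨M, hM, rfl⟩)
  · rw [star_pos]; exact Or.inr ⟨M, hM, rfl⟩

/-- Finite "stratified" family of languages containing all languages of expressions
with at most `n` letter occurrences. -/
def Fgen : ℕ → Set (Language α)
  | 0 => OPset {0, 1}
  | n + 1 => OPset (Fgen n ∪ Set.range (fun a : α => ({[a]} : Language α))
      ∪ Set.image2 (· * ·) (Fgen n) (Fgen n) ∪ Set.image2 (· + ·) (Fgen n) (Fgen n))

lemma Fgen_finite [Fintype α] : ∀ n, (Fgen (α := α) n).Finite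
  | 0 => OPset_finite ((Set.finite_singleton _).insert _)
  | n + 1 => by
    have h := Fgen_finite n
    exact OPset_finite (((h.union (Set.finite_range _)).union
      (h.image2 _ h)).union (h.image2 _ h))

lemma zero_mem_Fgen : ∀ n, (0 : Language α) ∈ Fgen n
  | 0 => subset_OPset _ (Or.inl rfl)
  | n + 1 => subset_OPset _ (Or.inl (Or.inl (Or.inl (zero_mem_Fgen n))))

lemma one_mem_Fgen : ∀ n, (1 : Language α) ∈ Fgen n
  | 0 => subset_OPset _ (Or.inr rfl)
  | n + 1 => subset_OPset _ (Or.inl (Or.inl (Or.inl (one_mem_Fgen n))))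

lemma Fgen_succ_mono : ∀ n, Fgen (α := α) n ⊆ Fgen (n + 1)
  | 0 => by
    apply OPset_mono
    intro L hL
    refine Or.inl (Or.inl (Or.inl ?_))
    rcases Set.mem_insert_iff.1 hL with rfl | hL
    · exact zero_mem_Fgen 0
    · rw [Set.mem_singleton_iff.1 hL]; exact one_mem_Fgen 0
  | n + 1 => by
    apply OPset_mono
    have h := Fgen_succ_mono n
    exact Set.union_subset_union (Set.union_subset_union
      (Set.union_subset_union h subset_rfl)
      (Set.image2_subset h h)) (Set.image2_subset h h)

lemma Fgen_mono {m n : ℕ} (h : m ≤ n) : Fgen (α := α) m ⊆ Fgen n := by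
  induction n with
  | zero => simp [Nat.le_zero.1 h]
  | succ n ih =>
    rcases Nat.le_succ_iff.mp h with h' | rfl
    · exact (ih h').trans (Fgen_succ_mono n)
    · exact subset_rfl

lemma Fgen_zero_subset : Fgen (α := α) 0 ⊆ {0, 1} := by
  rintro L hL
  rcases hL with ((h | ⟨M, hM, rfl⟩) | ⟨M, hM, rfl⟩) | ⟨M, hM, rfl⟩
  · exact h
  all_goals
    rcases Set.mem_insert_iff.1 hM with rfl | hM
  · show (0 : Language α) + 1 ∈ ({0, 1} : Set (Language α))
    rw [zero_add]; exact Or.inr rfl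
  · rw [Set.mem_singleton_iff.1 hM]
    show (1 : Language α) + 1 ∈ ({0, 1} : Set (Language α))
    rw [add_idem]; exact Or.inr rfl
  · show (0 : Language α) * (0 : Language α)∗ ∈ ({0, 1} : Set (Language α))
    rw [zero_mul]; exact Or.inl rfl
  · rw [Set.mem_singleton_iff.1 hM]
    show (1 : Language α) * (1 : Language α)∗ ∈ ({0, 1} : Set (Language α))
    rw [kstar_one, mul_one]; exact Or.inr rfl
  · show (0 : Language α)∗ ∈ ({0, 1} : Set (Language α))
    rw [kstar_zero]; exact Or.inr rfl
  · rw [Set.mem_singleton_iff.1 hM]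
    show (1 : Language α)∗ ∈ ({0, 1} : Set (Language α))
    rw [kstar_one]; exact Or.inr rfl

lemma opt_mem_Fgen {n : ℕ} {L : Language α} (h : L ∈ Fgen n) : L + 1 ∈ Fgen n := by
  cases n <;> exact OPset_opt h

lemma pos_mem_Fgen {n : ℕ} {L : Language α} (h : L ∈ Fgen n) : L * L∗ ∈ Fgen n := by
  cases n <;> exact OPset_pos h

lemma mul_mem_Fgen : ∀ {m n : ℕ} {L M : Language α},
    L ∈ Fgen m → M ∈ Fgen n → L * M ∈ Fgen (m + n) := by
  intro m n L M hL hM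
  match m, n with
  | 0, n =>
    rcases Fgen_zero_subset hL with rfl | rfl
    · rw [zero_mul]; exact zero_mem_Fgen _
    · rw [one_mul, Nat.zero_add]; exact hM
  | m, 0 =>
    rcases Fgen_zero_subset hM with rfl | rfl
    · rw [mul_zero]; exact zero_mem_Fgen _
    · rw [mul_one]; exact hL
  | m + 1, n + 1 =>
    have h1 : L ∈ Fgen (m + n + 1) := Fgen_mono (by omega) hL
    have h2 : M ∈ Fgen (m + n + 1) := Fgen_mono (by omega) hM
    have : m + 1 + (n + 1) = (m + n + 1) + 1 := by omega
    rw [this]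
    exact subset_OPset _ (Or.inl (Or.inr (Set.mem_image2_of_mem h1 h2)))

lemma add_mem_Fgen : ∀ {m n : ℕ} {L M : Language α},
    L ∈ Fgen m → M ∈ Fgen n → L + M ∈ Fgen (m + n) := by
  intro m n L M hL hM
  match m, n with
  | 0, n =>
    rcases Fgen_zero_subset hL with rfl | rfl
    · rw [Nat.zero_add, zero_add]; exact hM
    · rw [Nat.zero_add, add_comm]; exact opt_mem_Fgen hM
  | m, 0 =>
    rcases Fgen_zero_subset hM with rfl | rfl
    · show L + 0 ∈ Fgen m
      rw [add_zero]; exact hL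
    · show L + 1 ∈ Fgen m
      exact opt_mem_Fgen hL
  | m + 1, n + 1 =>
    have h1 : L ∈ Fgen (m + n + 1) := Fgen_mono (by omega) hL
    have h2 : M ∈ Fgen (m + n + 1) := Fgen_mono (by omega) hM
    have : m + 1 + (n + 1) = (m + n + 1) + 1 := by omega
    rw [this]
    exact subset_OPset _ (Or.inr (Set.mem_image2_of_mem h1 h2))

lemma char_mem_Fgen (a : α) : ({[a]} : Language α) ∈ Fgen 1 :=
  subset_OPset _ (Or.inl (Or.inl (Or.inr ⟨a, rfl⟩)))

/-- Number of letter occurrences in an expression. -/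
def cnt : PRE α → ℕ
  | .empty => 0
  | .eps => 0
  | .char _ => 1
  | .paren r => cnt r
  | .cat r s => cnt r + cnt s
  | .alt r s => cnt r + cnt s
  | .opt r => cnt r
  | .pos r => cnt r

lemma lang_mem_Fgen : ∀ r : PRE α, r.lang ∈ Fgen (cnt r)
  | .empty => zero_mem_Fgen 0
  | .eps => one_mem_Fgen 0
  | .char a => char_mem_Fgen a
  | .paren r => lang_mem_Fgen r
  | .cat r s => mul_mem_Fgen (lang_mem_Fgen r) (lang_mem_Fgen s)
  | .alt r s => add_mem_Fgen (lang_mem_Fgen r) (lang_mem_Fgen s)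
  | .opt r => opt_mem_Fgen (lang_mem_Fgen r)
  | .pos r => pos_mem_Fgen (lang_mem_Fgen r)

lemma cnt_eq_sum [Fintype α] [DecidableEq α] :
    ∀ r : PRE α, cnt r = ∑ a : α, r.rep a
  | .empty => by simp [cnt, PRE.rep]
  | .eps => by simp [cnt, PRE.rep]
  | .char b => by simp [cnt, PRE.rep]
  | .paren r => by simpa [cnt, PRE.rep] using cnt_eq_sum r
  | .cat r s => by
    simp only [cnt, PRE.rep, Finset.sum_add_distrib, cnt_eq_sum r, cnt_eq_sum s]
  | .alt r s => by
    simp only [cnt, PRE.rep, Finset.sum_add_distrib, cnt_eq_sum r, cnt_eq_sum s]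
  | .opt r => by simpa [cnt, PRE.rep] using cnt_eq_sum r
  | .pos r => by simpa [cnt, PRE.rep] using cnt_eq_sum r

lemma cnt_le [Fintype α] [DecidableEq α] {k : ℕ} {r : PRE α} (h : PRE.IsKORE k r) :
    cnt r ≤ k * Fintype.card α := by
  rw [cnt_eq_sum]
  calc ∑ a : α, r.rep a ≤ ∑ _a : α, k := Finset.sum_le_sum fun a _ => h a
  _ = Fintype.card α * k := by rw [Finset.sum_const, smul_eq_mul]; rfl
  _ = k * Fintype.card α := mul_comm _ _

/-- Expression whose language contains the given word. -/
def wordPRE : List α → PRE α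
  | [] => .eps
  | a :: w => .cat (.char a) (wordPRE w)

lemma wordPRE_lang : ∀ w : List α, w ∈ (wordPRE w).lang
  | [] => nil_mem_one
  | a :: w => mem_mul.2 ⟨[a], rfl, w, wordPRE_lang w, rfl⟩

/-- Expression whose language contains every word of the sample. -/
noncomputable def samplePRE (S : Finset (List α)) : PRE α :=
  S.toList.foldr (fun w e => .alt (wordPRE w) e) .empty

lemma foldr_lang : ∀ (l : List (List α)) {w : List α}, w ∈ l →
    w ∈ (l.foldr (fun w e => PRE.alt (wordPRE w) e) PRE.empty).lang
  | [], _, hw => absurd hw List.not_mem_nil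
  | x :: l, w, hw => by
    rcases List.mem_cons.1 hw with rfl | hw
    · exact (mem_add _ _ _).2 (Or.inl (wordPRE_lang w))
    · exact (mem_add _ _ _).2 (Or.inr (foldr_lang l hw))

lemma samplePRE_lang {S : Finset (List α)} {w : List α} (hw : w ∈ S) :
    w ∈ (samplePRE S).lang :=
  foldr_lang _ (Finset.mem_toList.2 hw)

end Stmt6Aux

/-- For every k and every finite alphabet, the class of languages definable by
deterministic k-OREs is finite up to language equivalence; consequently the class of
deterministic k-OREs is learnable in the limit from positive data. -/
theorem stmt6 {α : Type} [Fintype α] [DecidableEq α] (k : ℕ) :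
    {L : Language α | ∃ r : PRE α, r.Deterministic ∧ PRE.IsKORE k r ∧ r.lang = L}.Finite ∧
    ∃ M : Finset (List α) → PRE α,
      Learns M {r : PRE α | r.Deterministic ∧ PRE.IsKORE k r} := by
  classical
  open Stmt6Aux in
  set 𝓛 : Set (Language α) :=
    {L : Language α | ∃ r : PRE α, r.Deterministic ∧ PRE.IsKORE k r ∧ r.lang = L} with h𝓛
  have hfin : 𝓛.Finite := by
    apply (Fgen_finite (k * Fintype.card α)).subset
    rintro L ⟨r, -, hk, rfl⟩
    exact Fgen_mono (cnt_le hk) (lang_mem_Fgen r)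
  refine ⟨hfin, ?_⟩
  -- candidate languages for a sample
  set cand : Finset (List α) → Set (Language α) :=
    fun S => {L ∈ 𝓛 | ∀ w ∈ S, w ∈ L} with hcand
  have key : ∀ S : Finset (List α), ∃ r : PRE α, (∀ w ∈ S, w ∈ r.lang) ∧
      ((cand S).Nonempty →
        r.lang ∈ cand S ∧ ∀ L' ∈ cand S, L' ≤ r.lang → r.lang = L') := by
    intro S
    by_cases h : (cand S).Nonempty
    · obtain ⟨L0, hL0, hmin'⟩ :=
        Set.Finite.exists_minimalFor id _ (hfin.subset (Set.sep_subset _ _)) h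
      have hmin : ∀ L' ∈ cand S, L' ≤ L0 → L0 = L' :=
        fun L' hL' hle => le_antisymm (hmin' hL' hle) hle
      obtain ⟨r, hdet, hk, hlang⟩ := hL0.1
      refine ⟨r, ?_, fun _ => ?_⟩
      · intro w hw; rw [hlang]; exact hL0.2 w hw
      · rw [hlang]
        exact ⟨hL0, fun L' hL' hle => hmin L' hL' hle⟩
    · exact ⟨samplePRE S, fun w hw => samplePRE_lang hw, fun hn => absurd hn h⟩
  refine ⟨fun S => (key S).choose, fun S => ((key S).choose_spec).1, ?_⟩
  rintro r ⟨hdet, hk⟩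
  have hLr : r.lang ∈ 𝓛 := ⟨r, hdet, hk, rfl⟩
  -- separating words
  set B : Set (Language α) := {L' ∈ 𝓛 | ¬ r.lang ≤ L'} with hB
  have hBw : ∀ L' ∈ B, ∃ w, w ∈ r.lang ∧ w ∉ L' := by
    intro L' hL'
    by_contra h
    push_neg at h
    exact hL'.2 fun w hw => h w hw
  set f : Language α → List α := fun L' =>
    if h : ∃ w, w ∈ r.lang ∧ w ∉ L' then h.choose else [] with hf
  have hfB : ∀ L' ∈ B, f L' ∈ r.lang ∧ f L' ∉ L' := by
    intro L' hL'
    have h := hBw L' hL'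
    simp only [hf, dif_pos h]
    exact h.choose_spec
  set Sr : Finset (List α) := ((hfin.subset (Set.sep_subset _ _)).toFinset.image f)
    with hSr
  refine ⟨Sr, ?_, ?_⟩
  · intro w hw
    rw [hSr] at hw
    obtain ⟨L', hL', rfl⟩ := Finset.mem_image.1 hw
    exact (hfB L' ((Set.Finite.mem_toFinset _).1 hL')).1
  · intro S hSrS hSL
    have hcne : (cand S).Nonempty := ⟨r.lang, hLr, hSL⟩
    obtain ⟨hmem, hmin⟩ := ((key S).choose_spec).2 hcne
    set L0 := ((key S).choose).lang
    have hsub : r.lang ≤ L0 := by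
      by_contra hns
      have hL0B : L0 ∈ B := ⟨hmem.1, hns⟩
      have : f L0 ∈ Sr := Finset.mem_image_of_mem f ((Set.Finite.mem_toFinset _).2 hL0B)
      exact (hfB L0 hL0B).2 (hmem.2 (f L0) (hSrS this))
    exact hmin r.lang ⟨hLr, hSL⟩ hsub
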